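/- One-norm square-root bound for equal-neighbor matrices: If W ∈ {0,1}^{n×n} is symmetric with every row having at least one 1, dᵢ = Σⱼ W_{ij}, and P_{ij} = W_{ij}/dᵢ, then for every k ∈ N, (1/n)·max_j Σᵢ (Pᵏ)_{ij} ≤ 2·((1/n)·max_j Σᵢ P_{ij})^{1/2}. -/

import Mathlib

/-- Cauchy–Schwarz in the form `(∑ p f)² ≤ (∑ p) (∑ p f²)` for nonnegative weights `p`. -/
lemma cs_weighted_sq {n : ℕ} (p f : Fin n → ℝ) (hp : ∀ i, 0 ≤ p i) :
    (∑ i, p i * f i) ^ 2 ≤ (∑ i, p i) * ∑ i, p i * f i ^ 2 := by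
  have h := Finset.sum_mul_sq_le_sq_mul_sq Finset.univ
    (fun i => Real.sqrt (p i)) (fun i => Real.sqrt (p i) * f i)
  calc (∑ i, p i * f i) ^ 2
      = (∑ i, Real.sqrt (p i) * (Real.sqrt (p i) * f i)) ^ 2 := by
        congr 1
        refine Finset.sum_congr rfl fun i _ => ?_
        rw [← mul_assoc, Real.mul_self_sqrt (hp i)]
    _ ≤ (∑ i, Real.sqrt (p i) ^ 2) * ∑ i, (Real.sqrt (p i) * f i) ^ 2 := h
    _ = (∑ i, p i) * ∑ i, p i * f i ^ 2 := by
        congr 1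
        · exact Finset.sum_congr rfl fun i _ => Real.sq_sqrt (hp i)
        · refine Finset.sum_congr rfl fun i _ => ?_
          rw [mul_pow, Real.sq_sqrt (hp i)]

/-- One-norm square-root bound for equal-neighbor matrices: for every `k`,
`(1/n)·max_j ∑ i (Pᵏ)_{ij} ≤ 2·((1/n)·max_j ∑ i P_{ij})^{1/2}`. -/
theorem equal_neighbor_sqrt_bound (n : ℕ) (hn : 0 < n)
    (W : Matrix (Fin n) (Fin n) ℝ)
    (hW_binary : ∀ i j, W i j = 0 ∨ W i j = 1)
    (hW_symm : ∀ i j, W i j = W j i)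
    (d : Fin n → ℝ) (hd : ∀ i, d i = ∑ j, W i j) (hd_pos : ∀ i, 1 ≤ d i)
    (P : Matrix (Fin n) (Fin n) ℝ) (hP : ∀ i j, P i j = W i j / d i)
    (k : ℕ) :
    (1 / (n : ℝ)) *
      (Finset.univ.sup' (Finset.univ_nonempty_iff.mpr (Fin.pos_iff_nonempty.mp hn))
        fun j => ∑ i, (P ^ k) i j) ≤
    2 * Real.sqrt ((1 / (n : ℝ)) *
      (Finset.univ.sup' (Finset.univ_nonempty_iff.mpr (Fin.pos_iff_nonempty.mp hn))
        fun j => ∑ i, P i j)) := by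
  have hne : (Finset.univ : Finset (Fin n)).Nonempty :=
    Finset.univ_nonempty_iff.mpr (Fin.pos_iff_nonempty.mp hn)
  have hn0 : (0 : ℝ) < n := by exact_mod_cast hn
  have hd1 : ∀ i, (0 : ℝ) < d i := fun i => lt_of_lt_of_le one_pos (hd_pos i)
  have hW0 : ∀ i j, 0 ≤ W i j := fun i j => by
    rcases hW_binary i j with h | h <;> rw [h] <;> norm_num
  have hW1 : ∀ i j, W i j ≤ 1 := fun i j => by
    rcases hW_binary i j with h | h <;> rw [h] <;> norm_num
  have hP0 : ∀ i j, 0 ≤ P i j := fun i j => by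
    rw [hP]; exact div_nonneg (hW0 i j) (hd1 i).le
  have hProw : ∀ i, ∑ j, P i j = 1 := by
    intro i
    simp only [hP]
    rw [← Finset.sum_div, ← hd, div_self (hd1 i).ne']
  set S := Finset.univ.sup' hne (fun j => ∑ i, P i j) with hSdef
  have hcolS : ∀ j, ∑ i, P i j ≤ S := fun j => Finset.le_sup' (fun j => ∑ i, P i j) (Finset.mem_univ j)
  have hS1 : (1 : ℝ) ≤ S := by
    have hsum : ∑ j, ∑ i, P i j = (n : ℝ) := by
      rw [Finset.sum_comm]; simp [hProw]
    have h1 : (n : ℝ) ≤ n * S := by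
      calc (n : ℝ) = ∑ j : Fin n, ∑ i, P i j := hsum.symm
        _ ≤ ∑ _j : Fin n, S := Finset.sum_le_sum fun j _ => hcolS j
        _ = n * S := by simp [Finset.sum_const, nsmul_eq_mul]
    nlinarith
  have hS0 : (0 : ℝ) ≤ S := le_trans zero_le_one hS1
  -- entries of powers are nonneg
  have hPk0 : ∀ m i j, 0 ≤ (P ^ m) i j := by
    intro m
    induction m with
    | zero =>
      intro i j
      rw [pow_zero, Matrix.one_apply]
      split <;> norm_num
    | succ m ih =>
      intro i j
      rw [pow_succ, Matrix.mul_apply]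
      exact Finset.sum_nonneg fun l _ => mul_nonneg (ih i l) (hP0 l j)
  -- column-sum recurrence
  have hc_rec : ∀ m j, ∑ i, (P ^ (m + 1)) i j = ∑ l, (∑ i, (P ^ m) i l) * P l j := by
    intro m j
    simp only [pow_succ, Matrix.mul_apply]
    rw [Finset.sum_comm]
    simp [Finset.sum_mul]
  -- the Lyapunov quantity
  set Q : ℕ → ℝ := fun m => ∑ i, (∑ l, (P ^ m) l i) ^ 2 / d i with hQdef
  have hQ0 : Q 0 ≤ n := by
    have h1 : ∀ i : Fin n, ∑ l, (P ^ 0) l i = 1 := by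
      intro i; simp [Matrix.one_apply]
    calc Q 0 = ∑ i : Fin n, 1 / d i := by
          simp only [hQdef]
          exact Finset.sum_congr rfl fun i _ => by rw [h1 i, one_pow]
      _ ≤ ∑ _i : Fin n, (1 : ℝ) := Finset.sum_le_sum fun i _ => by
          rw [div_le_one (hd1 i)]; exact hd_pos i
      _ = n := by simp
  have hQmono : ∀ m, Q (m + 1) ≤ Q m := by
    intro m
    have key : ∀ j, (∑ i, (P ^ (m + 1)) i j) ^ 2 / d j
        ≤ ∑ l, W j l * ((∑ i, (P ^ m) i l) / d l) ^ 2 := by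
      intro j
      have h1 : ∑ i, (P ^ (m + 1)) i j
          = d j * ∑ l, P j l * ((∑ i, (P ^ m) i l) / d l) := by
        rw [hc_rec m j, Finset.mul_sum]
        refine Finset.sum_congr rfl fun l _ => ?_
        rw [hP j l, hP l j, hW_symm j l]
        field_simp [(hd1 j).ne', (hd1 l).ne']
      have hCS := cs_weighted_sq (fun l => P j l) (fun l => (∑ i, (P ^ m) i l) / d l)
        (fun l => hP0 j l)
      rw [hProw j, one_mul] at hCS
      calc (∑ i, (P ^ (m + 1)) i j) ^ 2 / d j
          = d j * (∑ l, P j l * ((∑ i, (P ^ m) i l) / d l)) ^ 2 := by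
            rw [h1, mul_pow]; field_simp [(hd1 j).ne']
        _ ≤ d j * ∑ l, P j l * ((∑ i, (P ^ m) i l) / d l) ^ 2 :=
            mul_le_mul_of_nonneg_left hCS (hd1 j).le
        _ = ∑ l, W j l * ((∑ i, (P ^ m) i l) / d l) ^ 2 := by
            rw [Finset.mul_sum]
            refine Finset.sum_congr rfl fun l _ => ?_
            rw [hP j l]
            field_simp [(hd1 j).ne', (hd1 l).ne']
    calc Q (m + 1) ≤ ∑ j, ∑ l, W j l * ((∑ i, (P ^ m) i l) / d l) ^ 2 :=
          Finset.sum_le_sum fun j _ => key j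
      _ = ∑ l, (∑ j, W j l) * ((∑ i, (P ^ m) i l) / d l) ^ 2 := by
          rw [Finset.sum_comm]
          exact Finset.sum_congr rfl fun l _ => by rw [Finset.sum_mul]
      _ = Q m := by
          refine Finset.sum_congr rfl fun l _ => ?_
          have : ∑ j, W j l = d l := by
            rw [hd l]
            exact Finset.sum_congr rfl fun j _ => (hW_symm j l).symm ▸ rfl
          rw [this, div_pow]
          field_simp [(hd1 l).ne']
  have hQ : ∀ m, Q m ≤ n := by
    intro m
    induction m with
    | zero => exact hQ0
    | succ m ih => exact le_trans (hQmono m) ih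
  -- main column bound
  have hck : ∀ m j, ∑ i, (P ^ m) i j ≤ Real.sqrt (S * n) := by
    intro m j
    have hn1 : (1 : ℝ) ≤ n := by exact_mod_cast hn
    have hSn1 : (1 : ℝ) ≤ S * n := by nlinarith
    match m with
    | 0 =>
      have h1 : ∑ i, (P ^ 0) i j = 1 := by simp [Matrix.one_apply]
      rw [h1]
      calc (1 : ℝ) = Real.sqrt 1 := Real.sqrt_one.symm
        _ ≤ Real.sqrt (S * n) := Real.sqrt_le_sqrt hSn1
    | m + 1 =>
      have hcnn : 0 ≤ ∑ i, (P ^ (m + 1)) i j :=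
        Finset.sum_nonneg fun i _ => hPk0 (m + 1) i j
      have hsq : (∑ i, (P ^ (m + 1)) i j) ^ 2 ≤ S * n := by
        have h1 : ∑ i, (P ^ (m + 1)) i j = ∑ l, P l j * (∑ i, (P ^ m) i l) := by
          rw [hc_rec m j]
          exact Finset.sum_congr rfl fun l _ => mul_comm _ _
        have hCS := cs_weighted_sq (fun l => P l j) (fun l => ∑ i, (P ^ m) i l)
          (fun l => hP0 l j)
        have h2 : ∑ l, P l j * (∑ i, (P ^ m) i l) ^ 2 ≤ Q m := by
          refine Finset.sum_le_sum fun l _ => ?_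
          rw [hP l j]
          rw [div_mul_eq_mul_div, div_le_div_iff₀ (hd1 l) (hd1 l)]
          exact mul_le_mul_of_nonneg_right
            (mul_le_of_le_one_left (sq_nonneg _) (hW1 l j)) (hd1 l).le
        calc (∑ i, (P ^ (m + 1)) i j) ^ 2
            = (∑ l, P l j * (∑ i, (P ^ m) i l)) ^ 2 := by rw [h1]
          _ ≤ (∑ l, P l j) * ∑ l, P l j * (∑ i, (P ^ m) i l) ^ 2 := hCS
          _ ≤ S * n := by
              have hb : 0 ≤ ∑ l, P l j * (∑ i, (P ^ m) i l) ^ 2 :=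
                Finset.sum_nonneg fun l _ => mul_nonneg (hP0 l j) (sq_nonneg _)
              have hQn := le_trans h2 (hQ m)
              have := hcolS j
              nlinarith
      calc ∑ i, (P ^ (m + 1)) i j = Real.sqrt ((∑ i, (P ^ (m + 1)) i j) ^ 2) :=
            (Real.sqrt_sq hcnn).symm
        _ ≤ Real.sqrt (S * n) := Real.sqrt_le_sqrt hsq
  -- assemble
  have heq : (1 / (n : ℝ)) * Real.sqrt (S * n) = Real.sqrt ((1 / n) * S) := by
    rw [show (1 / (n : ℝ)) * S = (1 / n) ^ 2 * (S * n) by field_simp,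
      Real.sqrt_mul (sq_nonneg (1 / (n : ℝ))) (S * (n : ℝ)),
      Real.sqrt_sq (by positivity : (0:ℝ) ≤ 1 / (n:ℝ))]
  calc (1 / (n : ℝ)) * (Finset.univ.sup' hne fun j => ∑ i, (P ^ k) i j)
      ≤ (1 / (n : ℝ)) * Real.sqrt (S * n) := by
        refine mul_le_mul_of_nonneg_left ?_ (by positivity)
        exact Finset.sup'_le hne _ fun j _ => hck k j
    _ = Real.sqrt ((1 / n) * S) := heq
    _ ≤ 2 * Real.sqrt ((1 / n) * S) := by
        nlinarith [Real.sqrt_nonneg ((1 / (n : ℝ)) * S)]
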